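/- X_n converges to X in probability if and only if for every subsequence of (X_n) and for some fixed α > 0, there exists a further subsequence (X_{n_k}) such that ∑_{k=1}^∞ |X_{n_k} − X|^α < ∞ almost surely. -/

import Mathlib

open MeasureTheory Filter
open scoped ENNReal Topology

/-- `Xₙ → X` in probability iff for every subsequence and some fixed `α > 0` there is a
further subsequence along which `∑ₖ |X_{n_k} − X|^α < ∞` almost surely. -/
theorem stmt8 {Ω : Type*} [MeasurableSpace Ω] (P : Measure Ω) [IsProbabilityMeasure P]
    (X : ℕ → Ω → ℝ) (X0 : Ω → ℝ)
    (hmeas : ∀ n, Measurable (X n)) (hmeas0 : Measurable X0)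
    (α : ℝ) (hα : 0 < α) :
    TendstoInMeasure P X atTop X0 ↔
      ∀ ns : ℕ → ℕ, StrictMono ns → ∃ ks : ℕ → ℕ, StrictMono ks ∧
        ∀ᵐ ω ∂P, Summable (fun k : ℕ => |X (ns (ks k)) ω - X0 ω| ^ α) := by
  constructor
  · intro h ns hns
    -- subsequence still tends in measure
    have hsub : TendstoInMeasure P (fun n => X (ns n)) atTop X0 := by
      intro ε hε
      exact (h ε hε).comp hns.tendsto_atTop
    -- extract ks with P {ω | (1/2)^k ≤ dist} ≤ (1/2)^k
    obtain ⟨ks, hks, hksP⟩ := extraction_forall_of_eventually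
      (P := fun k n => P {ω | ((1:ℝ)/2)^k ≤ dist (X (ns n) ω) (X0 ω)} ≤ ((2:ℝ≥0∞)⁻¹)^k)
      (fun k => by
        have h2 : (0:ℝ≥0∞) < ((2:ℝ≥0∞)⁻¹)^k :=
          ENNReal.pow_pos (ENNReal.inv_pos.mpr (by norm_num)) k
        have := (tendstoInMeasure_iff_dist.mp hsub (((1:ℝ)/2)^k) (by positivity)).eventually_lt_const h2
        exact this.mono fun n hn => hn.le)
    refine ⟨ks, hks, ?_⟩
    have hsum : (∑' k, P {ω | ((1:ℝ)/2)^k ≤ dist (X (ns (ks k)) ω) (X0 ω)}) ≠ ⊤ := by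
      refine ne_top_of_le_ne_top ?_ (ENNReal.tsum_le_tsum fun k => hksP k)
      rw [ENNReal.tsum_geometric, ENNReal.one_sub_inv_two]
      simp
    filter_upwards [MeasureTheory.ae_eventually_notMem (μ := P) hsum] with ω hω
    rw [eventually_atTop] at hω
    obtain ⟨N, hN⟩ := hω
    -- bound: for k ≥ N, |X (ns (ks k)) ω - X0 ω| < (1/2)^k
    set r : ℝ := ((1:ℝ)/2) ^ α with hr
    have hr0 : 0 < r := Real.rpow_pos_of_pos (by norm_num) α
    have hr1 : r < 1 := Real.rpow_lt_one (by norm_num) (by norm_num) hα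
    have hgeom : Summable (fun k : ℕ => r ^ k) := summable_geometric_of_lt_one hr0.le hr1
    rw [← summable_nat_add_iff N]
    refine Summable.of_nonneg_of_le
      (f := fun k : ℕ => r ^ (k + N))
      (fun k => Real.rpow_nonneg (abs_nonneg _) α) ?_
      ((summable_nat_add_iff N).mpr hgeom)
    intro k
    have hk := hN (k + N) (Nat.le_add_left _ _)
    simp only [Set.mem_setOf_eq, not_le] at hk
    have hd : dist (X (ns (ks (k + N))) ω) (X0 ω) = |X (ns (ks (k + N))) ω - X0 ω| :=
      Real.dist_eq _ _
    rw [hd] at hk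
    calc |X (ns (ks (k + N))) ω - X0 ω| ^ α
        ≤ (((1:ℝ)/2) ^ (k + N)) ^ α :=
          Real.rpow_le_rpow (abs_nonneg _) hk.le hα.le
      _ = r ^ (k + N) := by
          rw [← Real.rpow_natCast ((1:ℝ)/2) (k + N), ← Real.rpow_mul (by norm_num),
            mul_comm, Real.rpow_mul (by norm_num), Real.rpow_natCast]
  · intro h
    intro ε hε
    refine tendsto_of_subseq_tendsto fun ms hms => ?_
    -- ms : ℕ → ℕ tends to atTop; extract a strictly monotone subsequence of ms
    obtain ⟨φ, hφ, hmono⟩ := strictMono_subseq_of_tendsto_atTop hms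
    obtain ⟨ks, hks, hae⟩ := h (ms ∘ φ) hmono
    refine ⟨φ ∘ ks, ?_⟩
    have hae' : ∀ᵐ ω ∂P, Tendsto (fun k => X (ms (φ (ks k))) ω) atTop (nhds (X0 ω)) := by
      filter_upwards [hae] with ω hω
      have h0 : Tendsto (fun k => |X (ms (φ (ks k))) ω - X0 ω| ^ α) atTop (nhds 0) :=
        hω.tendsto_atTop_zero
      have hcont : Tendsto (fun x : ℝ => x ^ α⁻¹) (nhds 0) (nhds 0) := by
        have := (Real.continuousAt_rpow_const 0 α⁻¹ (Or.inr (by positivity)))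
        simpa [Real.zero_rpow (by positivity : α⁻¹ ≠ 0)] using this.tendsto
      have h1 : Tendsto (fun k => (|X (ms (φ (ks k))) ω - X0 ω| ^ α) ^ α⁻¹) atTop (nhds 0) :=
        hcont.comp h0
      have heq : ∀ k, (|X (ms (φ (ks k))) ω - X0 ω| ^ α) ^ α⁻¹
          = |X (ms (φ (ks k))) ω - X0 ω| := fun k => by
        rw [← Real.rpow_mul (abs_nonneg _), mul_inv_cancel₀ hα.ne', Real.rpow_one]
      simp only [heq] at h1
      exact tendsto_iff_dist_tendsto_zero.mpr (by simpa [Real.dist_eq] using h1)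
    have := tendstoInMeasure_of_tendsto_ae
      (fun k => ((hmeas (ms (φ (ks k)))).aestronglyMeasurable)) hae'
    exact this ε hε
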